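/- (Jacobi–Anger expansion, cosine part.) For all τ, θ ∈ ℝ, the series J₀(τ) + 2·Σ_{m=1}^{∞} J_{2m}(τ)·cos(2mθ) converges absolutely and equals cos(τ·sin θ). -/

import Mathlib

set_option maxHeartbeats 1000000


open Real

/-- The Bessel function of the first kind of (natural) order `k`. -/
noncomputable def besselJ (k : ℕ) (τ : ℝ) : ℝ :=
  ∑' m : ℕ, (-1 : ℝ) ^ m * (τ / 2) ^ (2 * m + k) /
    ((m.factorial : ℝ) * ((m + k).factorial : ℝ))

/-- Auxiliary bijection between `ℕ × ℕ` and `ℤ × ℕ`, sending `(p, q)` to `(p - q, min p q)`. -/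
def pqEquiv : ℕ × ℕ ≃ ℤ × ℕ where
  toFun z := ((z.1 : ℤ) - z.2, min z.1 z.2)
  invFun w := (w.2 + w.1.toNat, w.2 + (-w.1).toNat)
  left_inv := by rintro ⟨p, q⟩; simp only [Prod.mk.injEq]; omega
  right_inv := by rintro ⟨n, m⟩; simp only [Prod.mk.injEq]; constructor <;> omega

/-- The real double family whose sum over `ℕ × ℕ` is `cos (τ sin θ)`. -/
noncomputable def Hfun (τ θ : ℝ) : ℕ × ℕ → ℝ := fun z =>
  (-1 : ℝ) ^ z.2 * (τ / 2) ^ (z.1 + z.2) / ((z.1.factorial : ℝ) * (z.2.factorial : ℝ)) *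
    Real.cos (((z.1 : ℝ) - (z.2 : ℝ)) * θ)

/-- The fiberwise sums of `Hfun` along the bijection `pqEquiv`. -/
noncomputable def Ffun (τ θ : ℝ) : ℤ → ℝ := fun n =>
  ∑' m : ℕ, Hfun τ θ (pqEquiv.symm (n, m))

lemma Hfun_abs_summable (τ θ : ℝ) : Summable fun z : ℕ × ℕ => |Hfun τ θ z| := by
  have hb : Summable fun z : ℕ × ℕ =>
      ((|τ| / 2) ^ z.1 / (z.1.factorial : ℝ)) * ((|τ| / 2) ^ z.2 / (z.2.factorial : ℝ)) :=
by
    apply Summable.mul_of_nonneg (Real.summable_pow_div_factorial _)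
      (Real.summable_pow_div_factorial _)
    · intro p; positivity
    · intro q; positivity
  refine hb.of_nonneg_of_le (fun _ => abs_nonneg _) ?_
  rintro ⟨p, q⟩
  calc |Hfun τ θ (p, q)|
      ≤ |(-1 : ℝ) ^ q * (τ / 2) ^ (p + q) / ((p.factorial : ℝ) * (q.factorial : ℝ))| * 1 := by
        rw [Hfun, abs_mul]
        gcongr
        exact Real.abs_cos_le_one _
    _ = (|τ| / 2) ^ (p + q) / ((p.factorial : ℝ) * (q.factorial : ℝ)) := by
        rw [mul_one, abs_div, abs_mul, abs_pow, abs_pow, abs_neg, abs_one, one_pow, abs_div,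
          abs_two, abs_mul, Nat.abs_cast, Nat.abs_cast, one_mul]
    _ = ((|τ| / 2) ^ p / (p.factorial : ℝ)) * ((|τ| / 2) ^ q / (q.factorial : ℝ)) := by
        rw [pow_add]; ring

lemma Ffun_nat (τ θ : ℝ) (n : ℕ) :
    Ffun τ θ (n : ℤ) = besselJ n τ * Real.cos ((n : ℝ) * θ) := by
  have h1 : ((n : ℤ)).toNat = n := by omega
  have h2 : (-(n : ℤ)).toNat = 0 := by omega
  calc Ffun τ θ (n : ℤ)
      = ∑' m : ℕ, ((-1 : ℝ) ^ m * (τ / 2) ^ (2 * m + n) /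
          ((m.factorial : ℝ) * ((m + n).factorial : ℝ))) * Real.cos ((n : ℝ) * θ) := by
        refine tsum_congr fun m => ?_
        show Hfun τ θ (m + ((n : ℤ)).toNat, m + (-(n : ℤ)).toNat) = _
        rw [h1, h2, Nat.add_zero, Hfun]
        have harg : (((m + n : ℕ) : ℝ) - (m : ℝ)) * θ = (n : ℝ) * θ := by push_cast; ring
        simp only
        rw [harg]
        ring
    _ = besselJ n τ * Real.cos ((n : ℝ) * θ) := by rw [tsum_mul_right, besselJ]

lemma Ffun_neg (τ θ : ℝ) (n : ℕ) :
    Ffun τ θ (-((n : ℤ) + 1)) =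
      (-1 : ℝ) ^ (n + 1) * (besselJ (n + 1) τ * Real.cos (((n : ℝ) + 1) * θ)) := by
  have h1 : ((-((n : ℤ) + 1))).toNat = 0 := by omega
  have h2 : (-(-((n : ℤ) + 1))).toNat = n + 1 := by omega
  calc Ffun τ θ (-((n : ℤ) + 1))
      = ∑' m : ℕ, ((-1 : ℝ) ^ (n + 1) * Real.cos (((n : ℝ) + 1) * θ)) *
          ((-1 : ℝ) ^ m * (τ / 2) ^ (2 * m + (n + 1)) /
            ((m.factorial : ℝ) * ((m + (n + 1)).factorial : ℝ))) := by
        refine tsum_congr fun m => ?_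
        show Hfun τ θ (m + (-((n : ℤ) + 1)).toNat, m + (-(-((n : ℤ) + 1))).toNat) = _
        rw [h1, h2, Nat.add_zero, Hfun]
        have harg : (((m : ℕ) : ℝ) - ((m + (n + 1) : ℕ) : ℝ)) * θ = -(((n : ℝ) + 1) * θ) := by
          push_cast; ring
        simp only
        rw [harg, Real.cos_neg]
        rw [pow_add ((-1 : ℝ)) m (n + 1)]
        ring
    _ = _ := by rw [tsum_mul_left, besselJ]; ring

theorem jacobi_anger_cos (τ θ : ℝ) :
    Summable (fun m : ℕ => |2 * besselJ (2 * (m + 1)) τ * Real.cos ((2 * (m + 1) : ℕ) * θ)|) ∧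
    besselJ 0 τ + ∑' m : ℕ, 2 * besselJ (2 * (m + 1)) τ * Real.cos ((2 * (m + 1) : ℕ) * θ) =
      Real.cos (τ * Real.sin θ) := by
  -- Summability of the double family
  have hHabs := Hfun_abs_summable τ θ
  have hH : Summable (Hfun τ θ) := summable_abs_iff.mp hHabs
  have hKabs : Summable fun w : ℤ × ℕ => |Hfun τ θ (pqEquiv.symm w)| :=
    (pqEquiv.symm).summable_iff.mpr hHabs
  have hK : Summable fun w : ℤ × ℕ => Hfun τ θ (pqEquiv.symm w) :=
    (pqEquiv.symm).summable_iff.mpr hH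
  have hAsum : Summable (fun n : ℤ => ∑' m : ℕ, |Hfun τ θ (pqEquiv.symm (n, m))|) :=
    (hKabs.hasSum.prod_fiberwise (fun n => (hKabs.prod_factor n).hasSum)).summable
  have hFabs : Summable fun n : ℤ => |Ffun τ θ n| := by
    refine hAsum.of_nonneg_of_le (fun _ => abs_nonneg _) fun n => ?_
    simpa [Real.norm_eq_abs, Ffun] using norm_tsum_le_tsum_norm
      (f := fun m : ℕ => Hfun τ θ (pqEquiv.symm (n, m))) (by simpa using hKabs.prod_factor n)
  have hF : Summable (Ffun τ θ) := summable_abs_iff.mp hFabs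
  -- The cosine as the sum of the double family
  have hterm : ∀ p q : ℕ,
      (((τ/2 : ℂ) * Complex.exp ((θ : ℂ) * Complex.I)) ^ p / (p.factorial : ℂ)) *
        ((-(τ/2 : ℂ) * Complex.exp (-((θ : ℂ) * Complex.I))) ^ q / (q.factorial : ℂ)) =
      (((-1 : ℝ) ^ q * (τ/2) ^ (p + q) / ((p.factorial : ℝ) * (q.factorial : ℝ)) : ℝ) : ℂ) *
        Complex.exp ((((p : ℝ) - q) * θ : ℝ) * Complex.I) := by
    intro p q
    have e1 : Complex.exp ((θ : ℂ) * Complex.I) ^ p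
        = Complex.exp ((p : ℂ) * ((θ : ℂ) * Complex.I)) := by rw [Complex.exp_nat_mul]
    have e2 : Complex.exp (-((θ : ℂ) * Complex.I)) ^ q
        = Complex.exp ((q : ℂ) * (-((θ : ℂ) * Complex.I))) := by rw [Complex.exp_nat_mul]
    rw [mul_pow, mul_pow, e1, e2, neg_pow (τ/2 : ℂ)]
    rw [show ((((p : ℝ) - q) * θ : ℝ) : ℂ) * Complex.I
        = (p : ℂ) * ((θ : ℂ) * Complex.I) + (q : ℂ) * (-((θ : ℂ) * Complex.I)) by
          push_cast; ring]
    rw [Complex.exp_add]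
    push_cast
    ring
  have hf : Summable fun p : ℕ =>
      ‖((τ/2 : ℂ) * Complex.exp ((θ : ℂ) * Complex.I)) ^ p / (p.factorial : ℂ)‖ := by
    simpa [norm_div, norm_pow] using
      Real.summable_pow_div_factorial ‖(τ/2 : ℂ) * Complex.exp ((θ : ℂ) * Complex.I)‖
  have hg : Summable fun q : ℕ =>
      ‖(-(τ/2 : ℂ) * Complex.exp (-((θ : ℂ) * Complex.I))) ^ q / (q.factorial : ℂ)‖ := by
    simpa [norm_div, norm_pow] using
      Real.summable_pow_div_factorial ‖(-(τ/2 : ℂ)) * Complex.exp (-((θ : ℂ) * Complex.I))‖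
  have key : Real.cos (τ * Real.sin θ) = ∑' z : ℕ × ℕ, Hfun τ θ z := by
    calc Real.cos (τ * Real.sin θ)
        = (Complex.exp ((τ * Real.sin θ : ℝ) * Complex.I)).re :=
          (Complex.exp_ofReal_mul_I_re _).symm
      _ = (Complex.exp ((τ/2 : ℂ) * Complex.exp ((θ : ℂ) * Complex.I)) *
            Complex.exp (-(τ/2 : ℂ) * Complex.exp (-((θ : ℂ) * Complex.I)))).re := by
          rw [← Complex.exp_add]
          congr 2
          push_cast
          rw [Complex.sin]
          ring_nf
          rw [Complex.I_sq]
          ring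
      _ = ((∑' p : ℕ, ((τ/2 : ℂ) * Complex.exp ((θ : ℂ) * Complex.I)) ^ p / (p.factorial : ℂ)) *
            (∑' q : ℕ, (-(τ/2 : ℂ) * Complex.exp (-((θ : ℂ) * Complex.I))) ^ q /
              (q.factorial : ℂ))).re := by
          rw [Complex.exp_eq_exp_ℂ, NormedSpace.exp_eq_tsum_div]
      _ = (∑' z : ℕ × ℕ,
            (((τ/2 : ℂ) * Complex.exp ((θ : ℂ) * Complex.I)) ^ z.1 / (z.1.factorial : ℂ)) *
            ((-(τ/2 : ℂ) * Complex.exp (-((θ : ℂ) * Complex.I))) ^ z.2 /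
              (z.2.factorial : ℂ))).re := by
          rw [tsum_mul_tsum_of_summable_norm hf hg]
      _ = ∑' z : ℕ × ℕ, Hfun τ θ z := by
          rw [Complex.re_tsum (summable_mul_of_summable_norm hf hg)]
          refine tsum_congr fun z => ?_
          rw [hterm z.1 z.2, Complex.re_ofReal_mul, Complex.exp_ofReal_mul_I_re]
          rfl
  -- Reindex the double sum
  have key2 : ∑' z : ℕ × ℕ, Hfun τ θ z = ∑' n : ℤ, Ffun τ θ n := by
    rw [← (pqEquiv.symm).tsum_eq (Hfun τ θ), Summable.tsum_prod' hK fun n => hK.prod_factor n]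
    rfl
  -- Split the ℤ-sum
  have inj1 : Function.Injective fun n : ℕ => (n : ℤ) := fun a b h => by dsimp only at h; omega
  have inj2 : Function.Injective fun n : ℕ => -((n : ℤ) + 1) := fun a b h => by dsimp only at h; omega
  have inj3 : Function.Injective fun n : ℕ => ((n : ℤ) + 1) := fun a b h => by dsimp only at h; omega
  have hs1 : Summable fun n : ℕ => Ffun τ θ (n : ℤ) := hF.comp_injective inj1
  have hs2 : Summable fun n : ℕ => Ffun τ θ (-((n : ℤ) + 1)) := hF.comp_injective inj2
  have hs3 : Summable fun n : ℕ => Ffun τ θ ((n : ℤ) + 1) := hF.comp_injective inj3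
  have split : ∑' n : ℤ, Ffun τ θ n =
      ∑' n : ℕ, Ffun τ θ (n : ℤ) + ∑' n : ℕ, Ffun τ θ (-((n : ℤ) + 1)) :=
    tsum_of_nat_of_neg_add_one hs1 hs2
  -- Peel off the 0 term
  have peel : ∑' n : ℕ, Ffun τ θ (n : ℤ) =
      Ffun τ θ 0 + ∑' n : ℕ, Ffun τ θ ((n : ℤ) + 1) := by
    rw [Summable.tsum_eq_zero_add hs1]
    simp only [Nat.cast_zero, Nat.cast_add, Nat.cast_one]
  -- combine the two tails
  set G : ℕ → ℝ := fun n => Ffun τ θ ((n : ℤ) + 1) + Ffun τ θ (-((n : ℤ) + 1)) with hGdef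
  have combine : ∑' n : ℕ, Ffun τ θ ((n : ℤ) + 1) + ∑' n : ℕ, Ffun τ θ (-((n : ℤ) + 1))
      = ∑' n : ℕ, G n := (Summable.tsum_add hs3 hs2).symm
  -- closed form for G
  have hGval : ∀ n : ℕ, G n =
      (1 + (-1 : ℝ) ^ (n + 1)) * (besselJ (n + 1) τ * Real.cos (((n : ℝ) + 1) * θ)) := by
    intro n
    have h1 : Ffun τ θ ((n : ℤ) + 1) = besselJ (n + 1) τ * Real.cos (((n : ℝ) + 1) * θ) := by
      have := Ffun_nat τ θ (n + 1)
      push_cast at this ⊢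
      exact this
    rw [hGdef]
    simp only
    rw [h1, Ffun_neg τ θ n]
    ring
  have hGodd : ∀ m : ℕ, G (2 * m + 1) =
      2 * besselJ (2 * (m + 1)) τ * Real.cos (((2 * (m + 1) : ℕ) : ℝ) * θ) := by
    intro m
    rw [hGval]
    have hpow : (-1 : ℝ) ^ (2 * m + 1 + 1) = 1 := by
      rw [show 2 * m + 1 + 1 = 2 * (m + 1) by ring, pow_mul]
      norm_num
    rw [hpow]
    have harg : (((2 * m + 1 : ℕ) : ℝ) + 1) * θ = (((2 * (m + 1) : ℕ) : ℝ)) * θ := by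
      push_cast; ring
    rw [harg, show 2 * m + 1 + 1 = 2 * (m + 1) by ring]
    ring
  have hGeven : ∀ m : ℕ, G (2 * m) = 0 := by
    intro m
    rw [hGval]
    have hpow : (-1 : ℝ) ^ (2 * m + 1) = -1 := by
      rw [pow_succ, pow_mul]
      norm_num
    rw [hpow]
    ring
  -- drop the vanishing even terms
  have injodd : Function.Injective fun m : ℕ => 2 * m + 1 := fun a b h => by dsimp only at h; omega
  have hsupp : Function.support G ⊆ Set.range fun m : ℕ => 2 * m + 1 := by
    intro n hn
    rcases Nat.even_or_odd n with ⟨m, hm⟩ | ⟨m, hm⟩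
    · exfalso
      apply hn
      rw [show n = 2 * m by omega]
      exact hGeven m
    · exact ⟨m, by dsimp only; omega⟩
  have drop : ∑' m : ℕ, G (2 * m + 1) = ∑' n : ℕ, G n := injodd.tsum_eq hsupp
  -- absolute summability of G
  have hGabs : Summable fun n : ℕ => |G n| := by
    refine Summable.of_nonneg_of_le (fun _ => abs_nonneg _) (fun n => abs_add_le _ _)
      (Summable.add ?_ ?_)
    · exact (summable_abs_iff.mpr hF).comp_injective inj3
    · exact (summable_abs_iff.mpr hF).comp_injective inj2
  have hGoddabs : Summable fun m : ℕ => |G (2 * m + 1)| := hGabs.comp_injective injodd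
  constructor
  · refine hGoddabs.congr fun m => ?_
    rw [hGodd m]
  · have hF0 : Ffun τ θ 0 = besselJ 0 τ := by
      have := Ffun_nat τ θ 0
      simpa using this
    calc besselJ 0 τ + ∑' m : ℕ, 2 * besselJ (2 * (m + 1)) τ *
          Real.cos (((2 * (m + 1) : ℕ) : ℝ) * θ)
        = Ffun τ θ 0 + ∑' m : ℕ, G (2 * m + 1) := by
          rw [hF0, tsum_congr hGodd]
      _ = Ffun τ θ 0 + ∑' n : ℕ, G n := by rw [drop]
      _ = ∑' n : ℤ, Ffun τ θ n := by rw [split, peel]; linarith [combine]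
      _ = Real.cos (τ * Real.sin θ) := by rw [← key2, ← key]
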